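/- The maximal faces (facets) of the staircase complex 𝔅(P,n) are precisely the sets T_*(φ) where φ ∈ Hom(P,[n]) is upper normal, i.e., φ = (φ_-)^+. -/
import Mathlib


variable {P : Type*} [PartialOrder P] [Fintype P]

/-- `φ₋(p) = max {φ q | q < p}`, the max of the empty set being the bottom element of `[n]`. -/
def phiMinus [DecidableRel ((· < ·) : P → P → Prop)] {n : ℕ} (hn : 0 < n)
    (φ : P → Fin n) (p : P) : Fin n :=
  (insert (⟨0, hn⟩ : Fin n) ((Finset.univ.filter fun q => q < p).image φ)).sup'
    (Finset.insert_nonempty _ _) id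

/-- `φ⁺(p) = min {φ q | p < q}`, the min of the empty set being the top element of `[n]`. -/
def phiPlus [DecidableRel ((· < ·) : P → P → Prop)] {n : ℕ} (hn : 0 < n)
    (φ : P → Fin n) (p : P) : Fin n :=
  (insert (⟨n - 1, by omega⟩ : Fin n) ((Finset.univ.filter fun q => p < q).image φ)).inf'
    (Finset.insert_nonempty _ _) id

/-- `T_*(φ) = {(p,i) | φ q ≤ i ≤ φ p for all q < p}`. -/
def Tstar {n : ℕ} (φ : P → Fin n) : Set (P × Fin n) :=
  {x | x.2 ≤ φ x.1 ∧ ∀ q : P, q < x.1 → φ q ≤ x.2}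

/-- A staircase face is a subset of P × [n] containing no pair (p,i), (q,j) with
p < q in P and i > j in [n]; these are the faces of the staircase complex 𝔅(P,n). -/
def IsStaircaseFace {n : ℕ} (F : Set (P × Fin n)) : Prop :=
  ∀ x ∈ F, ∀ y ∈ F, x.1 < y.1 → ¬ y.2 < x.2

section Helpers

variable [DecidableRel ((· < ·) : P → P → Prop)] {n : ℕ}

lemma le_phiMinus (hn : 0 < n) (φ : P → Fin n) {p q : P} (h : q < p) :
    φ q ≤ phiMinus hn φ p :=
  Finset.le_sup' (f := id) (Finset.mem_insert_of_mem (Finset.mem_image_of_mem φ (by simp [h])))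

lemma phiMinus_le (hn : 0 < n) (φ : P → Fin n) {p : P} {i : Fin n}
    (h : ∀ q, q < p → φ q ≤ i) : phiMinus hn φ p ≤ i := by
  apply Finset.sup'_le
  intro b hb
  rcases Finset.mem_insert.1 hb with rfl | hb
  · simp [Fin.le_def]
  · obtain ⟨q, hq, rfl⟩ := Finset.mem_image.1 hb
    exact h q (by simpa using hq)

lemma phiPlus_le (hn : 0 < n) (φ : P → Fin n) {p q : P} (h : p < q) :
    phiPlus hn φ p ≤ φ q :=
  Finset.inf'_le (f := id) (Finset.mem_insert_of_mem (Finset.mem_image_of_mem φ (by simp [h])))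

lemma phiPlus_le_top (hn : 0 < n) (φ : P → Fin n) (p : P) :
    phiPlus hn φ p ≤ ⟨n - 1, by omega⟩ :=
  Finset.inf'_le (f := id) (Finset.mem_insert_self _ _)

lemma le_phiPlus (hn : 0 < n) (φ : P → Fin n) {p : P} {i : Fin n}
    (h : ∀ q, p < q → i ≤ φ q) : i ≤ phiPlus hn φ p := by
  apply Finset.le_inf'
  intro b hb
  rcases Finset.mem_insert.1 hb with rfl | hb
  · have := i.isLt
    simp only [id, Fin.le_def]
    omega
  · obtain ⟨q, hq, rfl⟩ := Finset.mem_image.1 hb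
    exact h q (by simpa using hq)

lemma phiPlus_cases (hn : 0 < n) (φ : P → Fin n) (p : P) :
    phiPlus hn φ p = ⟨n - 1, by omega⟩ ∨ ∃ q, p < q ∧ phiPlus hn φ p = φ q := by
  obtain ⟨b, hb, hb'⟩ := Finset.exists_mem_eq_inf' (Finset.insert_nonempty _ _)
    (id : Fin n → Fin n)
  rcases Finset.mem_insert.1 hb with rfl | hb
  · exact Or.inl hb'
  · obtain ⟨q, hq, rfl⟩ := Finset.mem_image.1 hb
    exact Or.inr ⟨q, by simpa using hq, hb'⟩

end Helpers

/-- The facets (maximal faces) of the staircase complex 𝔅(P,n) are precisely the sets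
T_*(φ) where φ is an upper normal isotone map, i.e. φ = (φ₋)⁺. -/
theorem stmt5 [DecidableRel ((· < ·) : P → P → Prop)] {n : ℕ} (hn : 0 < n)
    (F : Set (P × Fin n)) :
    (IsStaircaseFace F ∧ ∀ G : Set (P × Fin n), IsStaircaseFace G → F ⊆ G → F = G) ↔
      (∃ φ : P → Fin n, Monotone φ ∧ φ = phiPlus hn (phiMinus hn φ) ∧ F = Tstar φ) := by
  classical
  constructor
  · rintro ⟨hF, hmax⟩
    -- Step 1: F meets every fiber {p} × [n].
    have hne : ∀ p : P, ∃ i, (p, i) ∈ F := by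
      intro p
      set D : Finset (Fin n) :=
        insert (⟨n - 1, by omega⟩ : Fin n)
          ((Finset.univ.filter fun x : P × Fin n => p < x.1 ∧ x ∈ F).image Prod.snd) with hD
      have hDne : D.Nonempty := Finset.insert_nonempty _ _
      set i := D.inf' hDne id with hi
      refine ⟨i, ?_⟩
      have key : IsStaircaseFace (insert (p, i) F) := by
        intro x hx y hy hxy
        rcases Set.mem_insert_iff.1 hx with rfl | hx <;>
          rcases Set.mem_insert_iff.1 hy with rfl | hy
        · exact absurd hxy (lt_irrefl _)
        · refine not_lt.2 ?_
          exact Finset.inf'_le (f := id)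
            (Finset.mem_insert_of_mem (Finset.mem_image_of_mem _ (by simp [hxy, hy])))
        · refine not_lt.2 ?_
          show x.2 ≤ i
          rw [hi]
          apply Finset.le_inf'
          intro b hb
          rcases Finset.mem_insert.1 hb with rfl | hb
          · have := x.2.isLt
            simp only [id, Fin.le_def]
            omega
          · obtain ⟨z, hz, rfl⟩ := Finset.mem_image.1 hb
            simp only [Finset.mem_filter, Finset.mem_univ, true_and] at hz
            exact not_lt.1 (hF x hx z hz.2 (hxy.trans hz.1))
        · exact hF x hx y hy hxy
      have := hmax _ key (Set.subset_insert _ _)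
      rw [this]; exact Set.mem_insert _ _
    -- Step 2: define φ p as the largest i with (p,i) ∈ F.
    have hSne : ∀ p : P, (Finset.univ.filter fun j : Fin n => (p, j) ∈ F).Nonempty := by
      intro p
      obtain ⟨i, hi⟩ := hne p
      exact ⟨i, by simp [hi]⟩
    set φ : P → Fin n :=
      fun p => (Finset.univ.filter fun j : Fin n => (p, j) ∈ F).max' (hSne p) with hφ
    have hφF : ∀ p, (p, φ p) ∈ F := by
      intro p
      have := Finset.max'_mem _ (hSne p)
      simpa using this
    have hφmax : ∀ p i, (p, i) ∈ F → i ≤ φ p := by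
      intro p i h
      exact Finset.le_max' _ _ (by simp [h])
    have hmono : Monotone φ := by
      intro p q hpq
      rcases eq_or_lt_of_le hpq with rfl | h
      · exact le_refl _
      · exact not_lt.1 (hF _ (hφF p) _ (hφF q) h)
    -- Step 3: F = Tstar φ.
    have hFT : F = Tstar φ := by
      ext ⟨p, i⟩
      constructor
      · intro h
        exact ⟨hφmax p i h, fun q hq => not_lt.1 (hF _ (hφF q) _ h hq)⟩
      · rintro ⟨h1, h2⟩
        have key : IsStaircaseFace (insert (p, i) F) := by
          intro x hx y hy hxy
          rcases Set.mem_insert_iff.1 hx with rfl | hx <;>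
            rcases Set.mem_insert_iff.1 hy with rfl | hy
          · exact absurd hxy (lt_irrefl _)
          · exact not_lt.2 (h1.trans (not_lt.1 (hF _ (hφF p) _ hy hxy)))
          · exact not_lt.2 ((hφmax _ _ hx).trans (h2 x.1 hxy))
          · exact hF x hx y hy hxy
        have := hmax _ key (Set.subset_insert _ _)
        rw [this]; exact Set.mem_insert _ _
    refine ⟨φ, hmono, ?_, hFT⟩
    -- Step 4: upper normality.
    funext p
    apply le_antisymm
    · exact le_phiPlus hn _ fun q hq => le_phiMinus hn φ hq
    · by_contra hc
      push_neg at hc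
      have htop : (φ p).val < n - 1 := by
        have h1 := hc.trans_le (phiPlus_le_top hn (phiMinus hn φ) p)
        simpa [Fin.lt_def] using h1
      have hq : ∀ q, p < q → φ p < phiMinus hn φ q :=
        fun q h => hc.trans_le (phiPlus_le hn _ h)
      set j : Fin n := ⟨(φ p).val + 1, by omega⟩ with hj
      have key : IsStaircaseFace (insert (p, j) F) := by
        intro x hx y hy hxy
        rcases Set.mem_insert_iff.1 hx with rfl | hx <;>
          rcases Set.mem_insert_iff.1 hy with rfl | hy
        · exact absurd hxy (lt_irrefl _)
        · -- (p,j) then y ∈ F with p < y.1 : need j ≤ y.2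
          refine not_lt.2 ?_
          have hy' : (y.1, y.2) ∈ Tstar φ := by rw [← hFT]; simpa using hy
          have h2 : phiMinus hn φ y.1 ≤ y.2 := phiMinus_le hn φ fun q hq => hy'.2 q hq
          have h3 : φ p < y.2 := (hq y.1 hxy).trans_le h2
          simp only [hj, Fin.le_def, Fin.lt_def] at h3 ⊢
          omega
        · -- x ∈ F, then (p,j) : x.1 < p , need ¬ j < x.2
          refine not_lt.2 ?_
          have h2 : x.2 ≤ φ p := (hφmax _ _ hx).trans (hmono hxy.le)
          simp only [hj, Fin.le_def] at h2 ⊢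
          omega
        · exact hF x hx y hy hxy
      have hEq := hmax _ key (Set.subset_insert _ _)
      have : (p, j) ∈ F := by rw [hEq]; exact Set.mem_insert _ _
      have := hφmax _ _ this
      simp only [hj, Fin.le_def] at this
      omega
  · rintro ⟨φ, hmono, hnorm, rfl⟩
    constructor
    · -- Tstar φ is a staircase face
      rintro x ⟨hx1, hx2⟩ y ⟨hy1, hy2⟩ hxy
      exact not_lt.2 (hx1.trans (hy2 x.1 hxy))
    · -- maximality
      intro G hG hsub
      apply Set.Subset.antisymm hsub
      rintro ⟨p, i⟩ hpi
      have hTq : ∀ q : P, (q, φ q) ∈ Tstar φ :=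
        fun q => ⟨le_refl _, fun r hr => hmono hr.le⟩
      constructor
      · -- i ≤ φ p
        by_contra hlt
        push_neg at hlt
        rcases phiPlus_cases hn (phiMinus hn φ) p with h | ⟨q, hpq, hq⟩
        · have : φ p = (⟨n - 1, by omega⟩ : Fin n) := by rw [hnorm]; exact h
          have hi := i.isLt
          rw [this] at hlt
          simp only [Fin.lt_def] at hlt
          omega
        · have hmem : (q, phiMinus hn φ q) ∈ Tstar φ :=
            ⟨phiMinus_le hn φ fun r hr => hmono hr.le, fun r hr => le_phiMinus hn φ hr⟩
          have h2 : phiMinus hn φ q = φ p := (hq.symm.trans (congrFun hnorm p).symm)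
          have := hG _ hpi _ (hsub hmem) hpq
          rw [h2] at this
          exact this hlt
      · -- ∀ q < p, φ q ≤ i
        intro q hq
        exact not_lt.1 (hG _ (hsub (hTq q)) _ hpi hq)
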